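/- Let n > k > d ≥ 0 be integers satisfying (k+1)(n−k) + 2 ≤ C(k,0) + C(k,1) + ··· + C(k, k−d−1). Then there exists a Boolean function f : F_2^n → F_2 such that for every k-dimensional flat A of F_2^n, the restriction of f to A has algebraic degree strictly greater than d. Equivalently, g(n,k) > d. -/

import Mathlib

open scoped Classical

noncomputable section

/-- Boolean functions in `n` variables. -/
abbrev BF (n : ℕ) := (Fin n → ZMod 2) → ZMod 2

/-- `A` is a `k`-dimensional flat (coset of a `k`-dimensional linear subspace) of `𝔽₂ⁿ`. -/
def IsFlat {n : ℕ} (A : Set (Fin n → ZMod 2)) (k : ℕ) : Prop :=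
  ∃ (W : Submodule (ZMod 2) (Fin n → ZMod 2)) (v : Fin n → ZMod 2),
    Module.finrank (ZMod 2) W = k ∧ A = (fun w => v + w) '' (W : Set (Fin n → ZMod 2))

/-- The sum (parity) of `f` over a subset of `𝔽₂ⁿ`. -/
def flatSum {n : ℕ} (f : BF n) (A : Set (Fin n → ZMod 2)) : ZMod 2 :=
  ∑ x ∈ A.toFinite.toFinset, f x

/-- The restriction of `f` to `A` has algebraic degree at most `d`:
by the standard parity criterion, this holds iff the sum of `f` over every
`(d+1)`-dimensional flat contained in `A` vanishes. -/
def DegLE {n : ℕ} (f : BF n) (A : Set (Fin n → ZMod 2)) (d : ℕ) : Prop :=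
  ∀ B : Set (Fin n → ZMod 2), IsFlat B (d + 1) → B ⊆ A → flatSum f B = 0

/-- The algebraic degree of the restriction of `f` to `A`. -/
def degOn {n : ℕ} (f : BF n) (A : Set (Fin n → ZMod 2)) : ℕ :=
  sInf {d | DegLE f A d}

/-- `α(f, k)`: the minimal algebraic degree of `f` restricted to a `k`-dimensional flat. -/
def alphaDeg {n : ℕ} (f : BF n) (k : ℕ) : ℕ :=
  sInf {d | ∃ A, IsFlat A k ∧ degOn f A = d}

/-- `g(n, k) = max_f α(f, k)`. -/
def gdeg (n k : ℕ) : ℕ :=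
  sSup {m | ∃ f : BF n, alphaDeg f k = m}

/-- The nonlinearity of the restriction of `f` to `A`: the minimal Hamming distance,
on `A`, from `f` to an affine function. -/
def nlOn {n : ℕ} (f : BF n) (A : Set (Fin n → ZMod 2)) : ℕ :=
  sInf {m | ∃ (a : Fin n → ZMod 2) (c : ZMod 2),
    m = (A.toFinite.toFinset.filter (fun x => f x ≠ (∑ i, a i * x i) + c)).card}


-- ==== auxiliary lemmas ====

lemma flat_dim_le {n : ℕ} {A B : Set (Fin n → ZMod 2)} {k m : ℕ}
    (hA : IsFlat A k) (hB : IsFlat B m) (hBA : B ⊆ A) : m ≤ k := by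
  obtain ⟨W, v, hW, rfl⟩ := hA
  obtain ⟨W', v', hW', rfl⟩ := hB
  have hsub : W' ≤ W := by
    intro u hu
    have h1 : v' + u ∈ (fun w => v + w) '' (W : Set _) := hBA ⟨u, hu, rfl⟩
    have h2 : v' + 0 ∈ (fun w => v + w) '' (W : Set _) := hBA ⟨0, W'.zero_mem, rfl⟩
    obtain ⟨w1, hw1, he1⟩ := h1
    obtain ⟨w2, hw2, he2⟩ := h2
    have : u = w1 - w2 := by
      simp only [] at he1 he2
      have : v' + u - (v' + 0) = (v + w1) - (v + w2) := by rw [he1, he2]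
      simpa using this
    rw [this]; exact W.sub_mem hw1 hw2
  rw [← hW, ← hW']
  exact Submodule.finrank_mono hsub

-- coset retargeting
lemma coset_eq {n : ℕ} {W : Submodule (ZMod 2) (Fin n → ZMod 2)} {v x : Fin n → ZMod 2}
    (hx : x ∈ (fun w => v + w) '' (W : Set _)) :
    (fun w => x + w) '' (W : Set _) = (fun w => v + w) '' (W : Set _) := by
  obtain ⟨w0, hw0, rfl⟩ := hx
  ext u
  constructor
  · rintro ⟨w, hw, rfl⟩
    exact ⟨w0 + w, W.add_mem hw0 hw, by funext i; simp only [Pi.add_apply]; ring⟩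
  · rintro ⟨w, hw, rfl⟩
    exact ⟨w - w0, W.sub_mem hw hw0, by funext i; simp only [Pi.add_apply, Pi.sub_apply]; ring⟩

lemma flatSum_union {n : ℕ} (f : BF n) {B₁ B₂ : Set (Fin n → ZMod 2)}
    (h : Disjoint B₁ B₂) : flatSum f (B₁ ∪ B₂) = flatSum f B₁ + flatSum f B₂ := by
  unfold flatSum
  have he : (B₁ ∪ B₂).toFinite.toFinset = B₁.toFinite.toFinset ∪ B₂.toFinite.toFinset := by
    ext x
    simp only [Set.Finite.mem_toFinset, Finset.mem_union]
    exact Set.mem_union x B₁ B₂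
  rw [he, Finset.sum_union]
  rw [Finset.disjoint_left]
  intro a ha hb
  simp only [Set.Finite.mem_toFinset] at ha hb
  exact Set.disjoint_left.mp h ha hb

-- splitting a (e+2)-dim subspace as union of two cosets of an (e+1)-dim one
lemma subspace_split {n : ℕ} (W' : Submodule (ZMod 2) (Fin n → ZMod 2)) {e : ℕ}
    (hr : Module.finrank (ZMod 2) W' = e + 2) :
    ∃ (W'' : Submodule (ZMod 2) (Fin n → ZMod 2)) (w : Fin n → ZMod 2),
      Module.finrank (ZMod 2) W'' = e + 1 ∧ w ∈ W' ∧ w ∉ W'' ∧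
      (W' : Set (Fin n → ZMod 2)) = (W'' : Set _) ∪ (fun u => w + u) '' (W'' : Set _) := by
  classical
  have : FiniteDimensional (ZMod 2) (↥W') := by infer_instance
  let b0 := Module.finBasis (ZMod 2) ↥W'
  let b := b0.reindex (finCongr hr)
  let c : Fin (e + 2) → (Fin n → ZMod 2) := fun i => (b i : Fin n → ZMod 2)
  have hc : LinearIndependent (ZMod 2) c :=
    b.linearIndependent.map' W'.subtype (Submodule.ker_subtype W')
  have hrange : Set.range c = (W'.subtype : ↥W' →ₗ[ZMod 2] _) '' Set.range b := by
    rw [← Set.range_comp]; rfl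
  have hspanc : Submodule.span (ZMod 2) (Set.range c) = W' := by
    rw [hrange, Submodule.span_image, Module.Basis.span_eq, Submodule.map_top, Submodule.range_subtype]
  set W'' := Submodule.span (ZMod 2) (Set.range (c ∘ Fin.castSucc)) with hW''
  set w := c (Fin.last (e + 1)) with hw
  have hle : W'' ≤ W' := by
    rw [← hspanc]
    exact Submodule.span_mono (by rintro _ ⟨i, rfl⟩; exact ⟨i.castSucc, rfl⟩)
  have hwW' : w ∈ W' := by rw [← hspanc]; exact Submodule.subset_span ⟨_, rfl⟩
  have hrank'' : Module.finrank (ZMod 2) W'' = e + 1 := by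
    rw [hW'']
    rw [show Set.range (c ∘ Fin.castSucc) = Set.range (c ∘ Fin.castSucc) from rfl]
    have := finrank_span_eq_card (hc.comp Fin.castSucc (Fin.castSucc_injective _))
    simpa using this
  have hwn : w ∉ W'' := by
    have h1 : Set.range (c ∘ Fin.castSucc) = c '' Set.range Fin.castSucc := by
      rw [Set.range_comp]
    have h2 : (Fin.last (e+1)) ∉ Set.range (Fin.castSucc : Fin (e+1) → Fin (e+2)) := by
      rintro ⟨j, hj⟩
      exact absurd hj (Fin.castSucc_lt_last j).ne
    rw [hW'', h1]
    exact hc.notMem_span_image h2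
  refine ⟨W'', w, hrank'', hwW', hwn, ?_⟩
  ext u
  constructor
  · intro hu
    by_cases hu'' : u ∈ W''
    · exact Or.inl hu''
    · right
      have hune : u ≠ 0 := by rintro rfl; exact hu'' W''.zero_mem
      have hsup : W'' ⊔ Submodule.span (ZMod 2) {u} = W' := by
        apply Submodule.eq_of_le_of_finrank_le
        · exact sup_le hle ((Submodule.span_singleton_le_iff_mem u W').mpr hu)
        · have hinf : W'' ⊓ Submodule.span (ZMod 2) {u} = ⊥ := by
            rw [eq_bot_iff]
            intro x
            simp only [Submodule.mem_inf, Submodule.mem_bot]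
            rintro ⟨hx1, hx2⟩
            rw [Submodule.mem_span_singleton] at hx2
            obtain ⟨a, rfl⟩ := hx2
            rcases (by decide : ∀ a : ZMod 2, a = 0 ∨ a = 1) a with rfl | rfl
            · simp
            · rw [one_smul] at hx1; exact absurd hx1 hu''
          have := Submodule.finrank_sup_add_finrank_inf_eq W'' (Submodule.span (ZMod 2) {u})
          rw [hinf, hrank'', finrank_span_singleton hune] at this
          simp only [finrank_bot, add_zero] at this
          omega
      have : w ∈ W'' ⊔ Submodule.span (ZMod 2) {u} := by rw [hsup]; exact hwW'
      obtain ⟨y, hy, z, hz, hyz⟩ := Submodule.mem_sup.mp this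
      rw [Submodule.mem_span_singleton] at hz
      obtain ⟨a, rfl⟩ := hz
      rcases (by decide : ∀ a : ZMod 2, a = 0 ∨ a = 1) a with rfl | rfl
      · exfalso; rw [zero_smul, add_zero] at hyz; rw [← hyz] at hwn; exact hwn hy
      · rw [one_smul] at hyz
        refine ⟨-y, W''.neg_mem hy, ?_⟩
        simp only []
        rw [← hyz]; abel
  · rintro (hu | ⟨y, hy, rfl⟩)
    · exact hle hu
    · exact W'.add_mem hwW' (hle hy)

lemma degle_succ {n : ℕ} {f : BF n} {A : Set (Fin n → ZMod 2)} {e : ℕ}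
    (h : DegLE f A e) : DegLE f A (e + 1) := by
  rintro B ⟨W', v', hW', rfl⟩ hBA
  obtain ⟨W'', w, hr'', hwW', hwn, hsplit⟩ := subspace_split W' hW'
  have himg : (fun w0 => v' + w0) '' (W' : Set _) =
      ((fun w0 => v' + w0) '' (W'' : Set _)) ∪ ((fun w0 => (v' + w) + w0) '' (W'' : Set _)) := by
    rw [hsplit, Set.image_union, ← Set.image_comp]
    congr 1
    · ext u; constructor
      · rintro ⟨y, hy, rfl⟩; exact ⟨y, hy, by simp only [Function.comp]; abel⟩
      · rintro ⟨y, hy, rfl⟩; exact ⟨y, hy, by simp only [Function.comp]; abel⟩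
  have hdisj : Disjoint ((fun w0 => v' + w0) '' (W'' : Set _))
      ((fun w0 => (v' + w) + w0) '' (W'' : Set _)) := by
    rw [Set.disjoint_left]
    rintro _ ⟨y, hy, rfl⟩ ⟨z, hz, hEq⟩
    simp only [] at hEq
    have : w = y - z := by
      have : v' + w + z = v' + y := hEq
      have := congrArg (fun t => t - v' - z) this
      simpa [sub_eq_iff_eq_add] using by linear_combination (norm := abel) this
    rw [this] at hwn
    exact hwn (W''.sub_mem hy hz)
  have h1 : flatSum f ((fun w0 => v' + w0) '' (W'' : Set _)) = 0 :=
    h _ ⟨W'', v', hr'', rfl⟩ (fun x hx => hBA (by rw [himg]; exact Or.inl hx))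
  have h2 : flatSum f ((fun w0 => (v' + w) + w0) '' (W'' : Set _)) = 0 :=
    h _ ⟨W'', v' + w, hr'', rfl⟩ (fun x hx => hBA (by rw [himg]; exact Or.inr hx))
  rw [himg, flatSum_union f hdisj, h1, h2, add_zero]

lemma degle_mono {n : ℕ} {f : BF n} {A : Set (Fin n → ZMod 2)} {d e : ℕ}
    (h : DegLE f A d) (hde : d ≤ e) : DegLE f A e := by
  induction e with
  | zero => simpa [Nat.le_zero.mp hde] using h
  | succ m ih =>
    rcases Nat.lt_or_ge d (m + 1) with hlt | hge
    · exact degle_succ (ih (Nat.lt_succ_iff.mp hlt))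
    · have : d = m + 1 := le_antisymm hde hge
      subst this; exact h

def cubeF {k : ℕ} (T : Finset (Fin k)) : Finset (Fin k → ZMod 2) :=
  Finset.univ.filter (fun x => ∀ i ∉ T, x i = 0)

def coeff {k : ℕ} (g : BF k) (T : Finset (Fin k)) : ZMod 2 :=
  ∑ x ∈ cubeF T, g x

def supp {k : ℕ} (x : Fin k → ZMod 2) : Finset (Fin k) :=
  Finset.univ.filter (fun i => x i ≠ 0)

lemma mem_cubeF {k : ℕ} {T : Finset (Fin k)} {x : Fin k → ZMod 2} :
    x ∈ cubeF T ↔ supp x ⊆ T := by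
  simp only [cubeF, supp, Finset.mem_filter, Finset.mem_univ, true_and, Finset.subset_iff,
    Finset.mem_filter]
  constructor
  · intro h i hi
    by_contra hiT
    exact hi (h i hiT)
  · intro h i hiT
    by_contra hx
    exact hiT (h hx)

lemma eq_of_supp_eq {k : ℕ} {x y : Fin k → ZMod 2} (h : supp x = supp y) : x = y := by
  funext i
  rcases (by decide : ∀ a : ZMod 2, a = 0 ∨ a = 1) (x i) with hx | hx <;>
    rcases (by decide : ∀ a : ZMod 2, a = 0 ∨ a = 1) (y i) with hy | hy <;>
    rw [hx, hy]
  · exfalso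
    have : i ∈ supp y := by simp [supp, hy]
    rw [← h] at this; simp [supp, hx] at this
  · exfalso
    have : i ∈ supp x := by simp [supp, hx]
    rw [h] at this; simp [supp, hy] at this

lemma coeff_zero_imp_zero {k : ℕ} {g : BF k} (h : ∀ T, coeff g T = 0) : g = 0 := by
  have key : ∀ m : ℕ, ∀ x : Fin k → ZMod 2, (supp x).card = m → g x = 0 := by
    intro m
    induction m using Nat.strong_induction_on with
    | _ m ih =>
      intro x hx
      have hxmem : x ∈ cubeF (supp x) := mem_cubeF.mpr (le_refl _)
      have hsum := h (supp x)
      rw [coeff, ← Finset.add_sum_erase _ _ hxmem] at hsum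
      have hrest : ∑ y ∈ (cubeF (supp x)).erase x, g y = 0 := by
        apply Finset.sum_eq_zero
        intro y hy
        obtain ⟨hyx, hyc⟩ := Finset.mem_erase.mp hy
        have hsub : supp y ⊆ supp x := mem_cubeF.mp hyc
        have hne : supp y ≠ supp x := fun he => hyx (eq_of_supp_eq he)
        have : (supp y).card < (supp x).card :=
          Finset.card_lt_card (lt_of_le_of_ne hsub hne)
        exact ih _ (hx ▸ this) y rfl
      rw [hrest, add_zero] at hsum
      exact hsum
  funext x
  exact key _ x rfl

lemma coeff_injective {k : ℕ} {g g' : BF k} (h : ∀ T, coeff g T = coeff g' T) : g = g' := by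
  have hd : (g + g') = 0 := by
    apply coeff_zero_imp_zero
    intro T
    have : coeff (g + g') T = coeff g T + coeff g' T := by
      simp [coeff, Finset.sum_add_distrib]
    rw [this, h T]
    have : ∀ a : ZMod 2, a + a = 0 := by decide
    exact this _
  funext x
  have := congrFun hd x
  simp only [Pi.add_apply, Pi.zero_apply] at this
  have h2 : ∀ a b : ZMod 2, a + b = 0 → a = b := by decide
  exact h2 _ _ this

lemma choose_split {k d : ℕ} (hdk : d < k) :
    (∑ i ∈ Finset.range (d+1), Nat.choose k i) + (∑ i ∈ Finset.range (k-d), Nat.choose k i)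
      = 2 ^ k := by
  have h1 : ∑ i ∈ Finset.range (k+1), Nat.choose k i = 2 ^ k := Nat.sum_range_choose k
  rw [← h1, show Finset.range (k+1) = Finset.Ico 0 (k+1) from Finset.range_eq_Ico _]
  rw [← Finset.sum_Ico_consecutive (fun i => Nat.choose k i)
      (Nat.zero_le (d+1)) (by omega : d + 1 ≤ k + 1)]
  rw [show Finset.Ico 0 (d+1) = Finset.range (d+1) from (Finset.range_eq_Ico _).symm]
  congr 1
  rw [Finset.sum_Ico_eq_sum_range]
  have h2 : k + 1 - (d + 1) = k - d := by omega
  rw [h2]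
  rw [← Finset.sum_range_reflect (fun j => Nat.choose k (d + 1 + j)) (k - d)]
  apply Finset.sum_congr rfl
  intro j hj
  rw [Finset.mem_range] at hj
  have h3 : d + 1 + (k - d - 1 - j) = k - j := by omega
  simp only [h3]
  rw [← Nat.choose_symm (by omega : j ≤ k)]

section Flat
variable {n k : ℕ}

-- embedding structure for a flat
lemma flat_embed {A : Set (Fin n → ZMod 2)} (hA : IsFlat A k) :
    ∃ ι : (Fin k → ZMod 2) → (Fin n → ZMod 2),
      Function.Injective ι ∧ Set.range ι = A ∧
      (∀ (T : Finset (Fin k)), IsFlat (ι '' ↑(cubeF T)) T.card) := by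
  obtain ⟨W, v, hW, rfl⟩ := hA
  have : FiniteDimensional (ZMod 2) (↥W) := inferInstance
  let b0 := Module.finBasis (ZMod 2) ↥W
  let b := b0.reindex (finCongr hW)
  let c : Fin k → (Fin n → ZMod 2) := fun i => (b i : Fin n → ZMod 2)
  have hc : LinearIndependent (ZMod 2) c :=
    b.linearIndependent.map' W.subtype (Submodule.ker_subtype W)
  have hspanc : Submodule.span (ZMod 2) (Set.range c) = W := by
    have hrange : Set.range c = (W.subtype : ↥W →ₗ[ZMod 2] _) '' Set.range b := by
      rw [← Set.range_comp]; rfl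
    rw [hrange, Submodule.span_image, Module.Basis.span_eq, Submodule.map_top, Submodule.range_subtype]
  refine ⟨fun x => v + ∑ i, x i • c i, ?_, ?_, ?_⟩
  · intro x y hxy
    have hsum : ∑ i, x i • c i = ∑ i, y i • c i := by
      have := congrArg (fun t => t - v) hxy
      simpa using this
    have hz : ∑ i ∈ Finset.univ, (x i - y i) • c i = 0 := by
      simp only [sub_smul, Finset.sum_sub_distrib]
      rw [hsum]; simp
    have := linearIndependent_iff'.mp hc Finset.univ (fun i => x i - y i) hz
    funext i
    have hi := this i (Finset.mem_univ i)
    have : x i = y i := by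
      have := sub_eq_zero.mp hi
      exact this
    exact this
  · ext u
    simp only [Set.mem_range, Set.mem_image]
    constructor
    · rintro ⟨x, rfl⟩
      refine ⟨∑ i, x i • c i, ?_, rfl⟩
      rw [← hspanc]
      exact Submodule.sum_mem _ fun i _ =>
        Submodule.smul_mem _ _ (Submodule.subset_span ⟨i, rfl⟩)
    · rintro ⟨w, hw, rfl⟩
      rw [← hspanc] at hw
      obtain ⟨x, hx⟩ := (Submodule.mem_span_range_iff_exists_fun (ZMod 2)).mp hw
      exact ⟨x, by rw [hx]⟩
  · intro T
    have key : ∀ x : Fin k → ZMod 2, (∀ i ∉ T, x i = 0) →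
        ∑ i : {i // i ∈ T}, x ↑i • c ↑i = ∑ i, x i • c i := by
      intro x hx
      rw [Finset.sum_coe_sort T (fun i => x i • c i)]
      apply Finset.sum_subset (Finset.subset_univ T)
      intro i _ hiT
      rw [hx i hiT, zero_smul]
    refine ⟨Submodule.span (ZMod 2) (Set.range (fun i : T => c i)), v, ?_, ?_⟩
    · have hLI : LinearIndependent (ZMod 2) (fun i : T => c i) :=
        hc.comp Subtype.val Subtype.val_injective
      rw [finrank_span_eq_card hLI, Fintype.card_coe]
    · ext u
      simp only [Set.mem_image]
      constructor
      · rintro ⟨x, hx, rfl⟩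
        rw [Finset.mem_coe] at hx
        have hx' : ∀ i ∉ T, x i = 0 := by
          simpa [cubeF] using hx
        refine ⟨∑ i, x i • c i, ?_, rfl⟩
        rw [SetLike.mem_coe, Submodule.mem_span_range_iff_exists_fun (ZMod 2)]
        exact ⟨fun i => x ↑i, key x hx'⟩
      · rintro ⟨w, hw, rfl⟩
        rw [SetLike.mem_coe, Submodule.mem_span_range_iff_exists_fun (ZMod 2)] at hw
        obtain ⟨cc, hcc⟩ := hw
        set x : Fin k → ZMod 2 := fun i => if h : i ∈ T then cc ⟨i, h⟩ else 0 with hxdef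
        have hx' : ∀ i ∉ T, x i = 0 := by
          intro i hiT; simp [hxdef, hiT]
        refine ⟨x, ?_, ?_⟩
        · rw [Finset.mem_coe]
          simpa [cubeF] using hx'
        · have h1 : ∑ i : {i // i ∈ T}, x ↑i • c ↑i = ∑ i : {i // i ∈ T}, cc i • c ↑i := by
            apply Finset.sum_congr rfl
            intro i _
            have : x ↑i = cc i := by simp [hxdef, i.2]
            rw [this]
          rw [← hcc, ← h1, key x hx']

lemma flatSum_image (f : BF n)
    (ι : (Fin k → ZMod 2) → (Fin n → ZMod 2)) (hι : Function.Injective ι)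
    (s : Finset (Fin k → ZMod 2)) :
    flatSum f (ι '' ↑s) = ∑ x ∈ s, f (ι x) := by
  unfold flatSum
  have he : (ι '' ↑s).toFinite.toFinset = s.image ι := by
    ext u
    simp [Set.Finite.mem_toFinset]
  rw [he, Finset.sum_image (fun a _ b _ hab => hι hab)]

lemma coeff_vanish_of_degle {A : Set (Fin n → ZMod 2)} {f : BF n} {d : ℕ}
    (hA : IsFlat A k) (hf : DegLE f A d)
    (ι : (Fin k → ZMod 2) → (Fin n → ZMod 2)) (hι : Function.Injective ι)
    (hrange : Set.range ι = A)
    (hflat : ∀ (T : Finset (Fin k)), IsFlat (ι '' ↑(cubeF T)) T.card)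
    {T : Finset (Fin k)} (hT : d < T.card) :
    coeff (f ∘ ι) T = 0 := by
  have hmono : DegLE f A (T.card - 1) := degle_mono hf (by omega)
  have hcard : T.card - 1 + 1 = T.card := by omega
  have hsub : ι '' ↑(cubeF T) ⊆ A := by
    rw [← hrange]
    exact Set.image_subset_range ι _
  have h0 : flatSum f (ι '' ↑(cubeF T)) = 0 :=
    hmono _ (hcard ▸ hflat T) hsub
  rw [flatSum_image f ι hι] at h0
  exact h0

lemma card_small_sets {d : ℕ} (hdk : d < k) :
    Fintype.card {T : Finset (Fin k) // T.card ≤ d} = ∑ i ∈ Finset.range (d+1), Nat.choose k i := by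
  rw [Fintype.card_subtype]
  rw [Finset.card_eq_sum_card_fiberwise (f := fun T => T.card) (t := Finset.range (d+1))
    (fun T hT => by simp only [Finset.coe_filter, Finset.mem_coe, Finset.mem_filter, Finset.mem_univ, true_and, Set.mem_setOf_eq, Finset.mem_range] at hT ⊢; omega)]
  apply Finset.sum_congr rfl
  intro i hi
  rw [Finset.mem_range] at hi
  have : Finset.filter (fun T => T.card = i) (Finset.filter (fun T : Finset (Fin k) => T.card ≤ d) Finset.univ)
      = Finset.filter (fun T : Finset (Fin k) => T.card = i) Finset.univ := by
    rw [Finset.filter_filter]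
    apply Finset.filter_congr
    intro T _
    constructor
    · rintro ⟨_, h⟩; exact h
    · intro h; exact ⟨by omega, h⟩
  rw [this]
  have : Finset.filter (fun T : Finset (Fin k) => T.card = i) Finset.univ
      = Finset.powersetCard i Finset.univ := by
    ext T
    simp [Finset.mem_powersetCard]
  rw [this, Finset.card_powersetCard]
  simp

lemma perflat_count {d : ℕ} (hdk : d < k) (hkn : k ≤ n) {A : Set (Fin n → ZMod 2)}
    (hA : IsFlat A k) :
    (Finset.univ.filter fun f : BF n => DegLE f A d).card
      * 2 ^ (∑ i ∈ Finset.range (k - d), Nat.choose k i) ≤ 2 ^ (2 ^ n) := by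
  obtain ⟨ι, hι, hrange, hflat⟩ := flat_embed hA
  have hcardA : Fintype.card {y : Fin n → ZMod 2 // y ∈ A} = 2 ^ k := by
    have e1 : {y : Fin n → ZMod 2 // y ∈ A} ≃ (Fin k → ZMod 2) := by
      have : A = Set.range ι := hrange.symm
      subst this
      exact (Equiv.ofInjective ι hι).symm
    rw [Fintype.card_congr e1, Fintype.card_fun]
    simp [ZMod.card]
  have hcardV : Fintype.card (Fin n → ZMod 2) = 2 ^ n := by
    rw [Fintype.card_fun]; simp [ZMod.card]
  have hcompl : Fintype.card {y : Fin n → ZMod 2 // y ∉ A} = 2 ^ n - 2 ^ k := by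
    rw [Fintype.card_subtype_compl, hcardA, hcardV]
  -- the injection
  let P := ({T : Finset (Fin k) // T.card ≤ d} → ZMod 2) ×
    ({y : Fin n → ZMod 2 // y ∉ A} → ZMod 2)
  let Φ : {f : BF n // DegLE f A d} → P := fun f =>
    (fun T => coeff (f.1 ∘ ι) T.1, fun y => f.1 y.1)
  have hΦ : Function.Injective Φ := by
    rintro ⟨f, hf⟩ ⟨f', hf'⟩ hEq
    have h1 : ∀ T : Finset (Fin k), coeff (f ∘ ι) T = coeff (f' ∘ ι) T := by
      intro T
      by_cases hT : T.card ≤ d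
      · exact congrFun (congrArg Prod.fst hEq) ⟨T, hT⟩
      · rw [coeff_vanish_of_degle hA hf ι hι hrange hflat (by omega),
          coeff_vanish_of_degle hA hf' ι hι hrange hflat (by omega)]
    have hg : f ∘ ι = f' ∘ ι := coeff_injective h1
    apply Subtype.ext
    funext u
    by_cases hu : u ∈ A
    · rw [← hrange] at hu
      obtain ⟨x, rfl⟩ := hu
      exact congrFun hg x
    · exact congrFun (congrArg Prod.snd hEq) ⟨u, hu⟩
  have hcount : (Finset.univ.filter fun f : BF n => DegLE f A d).card
      ≤ 2 ^ (∑ i ∈ Finset.range (d+1), Nat.choose k i) * 2 ^ (2 ^ n - 2 ^ k) := by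
    have := Fintype.card_le_of_injective Φ hΦ
    rw [Fintype.card_subtype] at this
    refine le_trans this ?_
    rw [Fintype.card_prod, Fintype.card_fun, Fintype.card_fun, hcompl,
      card_small_sets hdk]
    simp [ZMod.card]
  refine le_trans (Nat.mul_le_mul_right _ hcount) ?_
  rw [mul_assoc, mul_comm (2 ^ (2 ^ n - 2 ^ k)), ← pow_add, ← pow_add]
  rw [add_comm (∑ i ∈ Finset.range (k - d), Nat.choose k i)]
  have hsplit := choose_split hdk
  have h2 : 2 ^ k ≤ 2 ^ n := Nat.pow_le_pow_right (by norm_num) hkn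
  apply Nat.pow_le_pow_right (by norm_num)
  omega

lemma aux_prod : ∀ k : ℕ, 1 ≤ k →
    (∏ j ∈ Finset.range k, 2^(j+1)) * (2^k + 2)
      ≤ 4 * 2^k * ∏ j ∈ Finset.range k, (2^(j+1) - 1) := by
  intro k
  induction k with
  | zero => omega
  | succ m ih =>
    intro _
    rcases Nat.eq_zero_or_pos m with rfl | hm
    · norm_num
    · have IH := ih hm
      rw [Finset.prod_range_succ, Finset.prod_range_succ]
      have hx : 2 ≤ 2 ^ m := by
        calc 2 = 2^1 := rfl
        _ ≤ 2^m := Nat.pow_le_pow_right (by norm_num) hm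
      -- goal: (Q * 2^(m+1)) * (2^(m+1) + 2) ≤ 4 * 2^(m+1) * (P * (2^(m+1+1) - 1))
      set Q := ∏ j ∈ Finset.range m, 2^(j+1) with hQ
      set P := ∏ j ∈ Finset.range m, (2^(j+1) - 1) with hP
      have key : 2^(m+1) * (2^(m+1) + 2) * (2^m + 2) ≤ 4 * 2^(m+1) * ((2^(m+1+1) - 1)) * (2^m+2)
          → True := fun _ => trivial
      -- step inequality: 2^(m+2) * (2^(m+1) + 2) ≤ 2 * (2^m + 2) * (2^(m+2) - 1)
      have hstep : 2^m * (2^(m+1) + 2) ≤ (2^m + 2) * (2^(m+1) - 1) := by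
        have e1 : 2^(m+1) = 2 * 2^m := by ring
        rw [e1]
        set x := 2^m with hxd
        have h1 : 1 ≤ 2 * x := by omega
        obtain ⟨y, hy⟩ := Nat.exists_eq_add_of_le h1
        have h5 : (x+2) * (2*x - 1) + (x+2) = (x+2) * (2*x) := by
          rw [hy, Nat.add_sub_cancel_left]
          ring
        have h6 : x * (2*x+2) + (x+2) ≤ (x+2) * (2*x) := by nlinarith [hx]
        linarith [h5, h6]
      have e2 : (2:ℕ)^(m+1) = 2 * 2^m := by ring
      calc Q * 2^(m+1) * (2^(m+1) + 2)
          = 2 * (Q * (2^m * (2^(m+1) + 2))) := by rw [e2]; ring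
        _ ≤ 2 * (Q * ((2^m + 2) * (2^(m+1) - 1))) := by
            apply Nat.mul_le_mul_left
            apply Nat.mul_le_mul_left
            exact hstep
        _ = (Q * (2^m + 2)) * (2 * (2^(m+1) - 1)) := by ring
        _ ≤ (4 * 2^m * P) * (2 * (2^(m+1) - 1)) := Nat.mul_le_mul_right _ IH
        _ = 4 * 2^(m+1) * (P * (2^(m+1) - 1)) := by rw [e2]; ring

lemma Nb_lb {k : ℕ} (hk : 1 ≤ k) :
    2^(k*k) < 4 * ∏ i ∈ Finset.range k, (2^k - 2^i) := by
  have hfact : ∀ i ∈ Finset.range k, 2^k - 2^i = 2^i * (2^(k-i) - 1) := by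
    intro i hi
    rw [Finset.mem_range] at hi
    have hp : (2:ℕ)^k = 2^i * 2^(k-i) := by
      rw [← pow_add]; congr 1; omega
    rw [Nat.mul_sub, mul_one, ← hp]
  rw [Finset.prod_congr rfl hfact, Finset.prod_mul_distrib]
  have hrefl : ∏ i ∈ Finset.range k, ((2:ℕ)^(k-i) - 1)
      = ∏ j ∈ Finset.range k, (2^(j+1) - 1) := by
    rw [← Finset.prod_range_reflect (fun j => 2^(j+1) - 1) k]
    apply Finset.prod_congr rfl
    intro i hi
    rw [Finset.mem_range] at hi
    congr 2
    omega
  rw [hrefl]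
  set P := ∏ j ∈ Finset.range k, ((2:ℕ)^(j+1) - 1) with hP
  set Q := ∏ j ∈ Finset.range k, (2:ℕ)^(j+1) with hQ
  set R := ∏ i ∈ Finset.range k, (2:ℕ)^i with hR
  have haux := aux_prod k hk
  have hQR : R * Q = 2^(k*k) := by
    rw [hR, hQ, Finset.prod_pow_eq_pow_sum, Finset.prod_pow_eq_pow_sum, ← pow_add]
    congr 1
    have hs := Finset.sum_range_id_mul_two k
    have h1 : ∑ j ∈ Finset.range k, (j+1) = (∑ j ∈ Finset.range k, j) + k := by
      rw [Finset.sum_add_distrib]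
      simp
    rw [h1]
    have hkk : k*(k-1) + k = k*k := by
      cases k with
      | zero => simp
      | succ m => simp [Nat.succ_sub_one]; ring
    set s := ∑ j ∈ Finset.range k, j
    linarith [hs, hkk]
  have hcancel : 2^(k*k) * 2^k < (4 * (R * P)) * 2^k := by
    calc 2^(k*k) * 2^k = R * Q * 2^k := by rw [hQR]
      _ < R * (Q * (2^k + 2)) := by
          have hQpos : 0 < Q := Finset.prod_pos (fun i _ => by positivity)
          have hRpos : 0 < R := Finset.prod_pos (fun i _ => by positivity)
          have h2 : Q * 2^k < Q * (2^k + 2) := by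
            have : (2:ℕ)^k < 2^k + 2 := by omega
            exact Nat.mul_lt_mul_of_le_of_lt (le_refl Q) this hQpos
          calc R * Q * 2^k = R * (Q * 2^k) := by ring
            _ < R * (Q * (2^k+2)) := by
                exact Nat.mul_lt_mul_of_le_of_lt (le_refl R) h2 hRpos
      _ ≤ R * (4 * 2^k * P) := Nat.mul_le_mul_left _ haux
      _ = (4 * (R * P)) * 2^k := by ring
  exact Nat.lt_of_mul_lt_mul_right hcancel

lemma flats_card {n k : ℕ} (hk : 1 ≤ k) (hkn : k ≤ n) :
    ((Finset.univ : Finset (Set (Fin n → ZMod 2))).filter (fun A => IsFlat A k)).card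
      < 2^((k+1)*(n-k)+2) := by
  classical
  set Nb := ∏ i ∈ Finset.range k, ((2:ℕ)^k - 2^i) with hNbdef
  set Flats := (Finset.univ : Finset (Set (Fin n → ZMod 2))).filter (fun A => IsFlat A k)
    with hFlats
  set S := ((Finset.univ : Finset (Fin k → (Fin n → ZMod 2))).filter
      (fun s => LinearIndependent (ZMod 2) s)) ×ˢ (Finset.univ : Finset (Fin n → ZMod 2))
    with hS
  set φ : (Fin k → (Fin n → ZMod 2)) × (Fin n → ZMod 2) → Set (Fin n → ZMod 2) :=
    fun p => (fun w => p.2 + w) '' ((Submodule.span (ZMod 2) (Set.range p.1) : Submodule (ZMod 2) _) : Set _)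
    with hφ
  have hmaps : ∀ p ∈ S, φ p ∈ Flats := by
    rintro ⟨s, v⟩ hp
    rw [hS, Finset.mem_product, Finset.mem_filter] at hp
    rw [hFlats, Finset.mem_filter]
    refine ⟨Finset.mem_univ _, Submodule.span (ZMod 2) (Set.range s), v, ?_, rfl⟩
    rw [finrank_span_eq_card hp.1.2]
    simp
  have hfiber : ∀ A ∈ Flats, Nb * 2^k ≤ (S.filter (fun p => φ p = A)).card := by
    intro A hA
    rw [hFlats, Finset.mem_filter] at hA
    obtain ⟨_, W, v, hW, rfl⟩ := hA
    have : FiniteDimensional (ZMod 2) ↥W := inferInstance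
    -- injection from bases of W times points of A into the fiber
    let D := {s : Fin k → ↥W // LinearIndependent (ZMod 2) s} ×
      {x : Fin n → ZMod 2 // x ∈ (fun w => v + w) '' (W : Set _)}
    let Ψ : D → (Fin k → (Fin n → ZMod 2)) × (Fin n → ZMod 2) :=
      fun q => (fun i => (q.1.1 i : Fin n → ZMod 2), q.2.1)
    have hΨmem : ∀ q : D, Ψ q ∈ S.filter (fun p => φ p = (fun w => v + w) '' (W : Set _)) := by
      rintro ⟨⟨s, hs⟩, ⟨x, hx⟩⟩
      have hLI : LinearIndependent (ZMod 2) (fun i => (s i : Fin n → ZMod 2)) :=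
        hs.map' W.subtype (Submodule.ker_subtype W)
      rw [Finset.mem_filter]
      constructor
      · rw [hS, Finset.mem_product, Finset.mem_filter]
        exact ⟨⟨Finset.mem_univ _, hLI⟩, Finset.mem_univ _⟩
      · have hspan : Submodule.span (ZMod 2) (Set.range (fun i => (s i : Fin n → ZMod 2))) = W := by
          apply Submodule.eq_of_le_of_finrank_le
          · rw [Submodule.span_le]
            rintro _ ⟨i, rfl⟩
            exact (s i).2
          · rw [hW, finrank_span_eq_card hLI]
            simp
        show (fun w => x + w) '' _ = _
        rw [hspan]
        exact coset_eq hx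
    have hΨinj : Function.Injective (fun q : D =>
        (⟨Ψ q, hΨmem q⟩ : {p // p ∈ S.filter (fun p => φ p = (fun w => v + w) '' (W : Set _))})) := by
      intro q q' hEq
      have hv : Ψ q = Ψ q' := congrArg Subtype.val hEq
      obtain ⟨⟨s, hs⟩, ⟨x, hx⟩⟩ := q
      obtain ⟨⟨s', hs'⟩, ⟨x', hx'⟩⟩ := q'
      have h1 : (fun i => ((s i : Fin n → ZMod 2))) = (fun i => (s' i : Fin n → ZMod 2)) :=
        congrArg Prod.fst hv
      have h2 : x = x' := congrArg Prod.snd hv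
      refine Prod.ext ?_ ?_
      · apply Subtype.ext
        funext i
        exact Subtype.ext (congrFun h1 i)
      · exact Subtype.ext h2
    have hcardD : Fintype.card D = Nb * 2^k := by
      rw [Fintype.card_prod]
      congr 1
      · have := card_linearIndependent (K := ZMod 2) (V := ↥W)
          (k := k) (by rw [hW])
        rw [Nat.card_eq_fintype_card] at this
        rw [this, hW]
        simp only [ZMod.card]
        rw [hNbdef, ← Fin.prod_univ_eq_prod_range]
      · have e1 : {x : Fin n → ZMod 2 // x ∈ (fun w => v + w) '' (W : Set _)} ≃ ↥W := by
          have := Equiv.Set.image (fun w => v + w) (W : Set (Fin n → ZMod 2))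
            (fun a b hab => by simpa using hab)
          exact (this.symm : _)
        rw [Fintype.card_congr e1]
        rw [Module.card_eq_pow_finrank (K := ZMod 2) (V := ↥W), hW]
        simp [ZMod.card]
    calc Nb * 2^k = Fintype.card D := hcardD.symm
      _ ≤ Fintype.card {p // p ∈ S.filter (fun p => φ p = (fun w => v + w) '' (W : Set _))} :=
          Fintype.card_le_of_injective _ hΨinj
      _ = (S.filter (fun p => φ p = (fun w => v + w) '' (W : Set _))).card := by
          rw [Fintype.card_coe]
  have hsum := Finset.card_eq_sum_card_fiberwise hmaps
  have hlow : Flats.card * (Nb * 2^k) ≤ S.card := by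
    rw [hsum]
    calc Flats.card * (Nb * 2^k) = ∑ _A ∈ Flats, Nb * 2^k := by
          rw [Finset.sum_const, smul_eq_mul]
      _ ≤ ∑ A ∈ Flats, (S.filter (fun p => φ p = A)).card := Finset.sum_le_sum hfiber
  have hScard : S.card ≤ 2^(n*k + n) := by
    rw [hS, Finset.card_product]
    calc _ ≤ (Finset.univ : Finset (Fin k → (Fin n → ZMod 2))).card
        * (Finset.univ : Finset (Fin n → ZMod 2)).card :=
          Nat.mul_le_mul_right _ (Finset.card_filter_le _ _)
      _ = 2^(n*k+n) := by
          rw [Finset.card_univ, Finset.card_univ, Fintype.card_fun, Fintype.card_fun]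
          simp only [ZMod.card, Fintype.card_fin]
          rw [pow_add, ← pow_mul]
  have hNb : 2^(k*k) < 4 * Nb := Nb_lb hk
  -- final arithmetic
  by_contra hcon
  push_neg at hcon
  have hexp : ((k+1)*(n-k)+2) + (k*k + k) = n*k + n + 2 := by
    have e : (k+1)*(n-k) + (k+1)*k = (k+1)*n := by
      rw [← Nat.mul_add]
      congr 1
      omega
    have e2 : (k+1)*k = k*k + k := by ring
    have e3 : (k+1)*n = n*k + n := by ring
    linarith [e, e2, e3]
  have hM : Flats.card * (Nb * 2^k) ≥ 2^((k+1)*(n-k)+2) * (Nb * 2^k) :=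
    Nat.mul_le_mul_right _ hcon
  have hNbp : 0 < Nb := by
    apply Finset.prod_pos
    intro i hi
    rw [Finset.mem_range] at hi
    have : (2:ℕ)^i < 2^k := Nat.pow_lt_pow_right (by norm_num) hi
    omega
  have hbig : 4 * (2^((k+1)*(n-k)+2) * (Nb * 2^k)) > 4 * 2^(n*k+n) := by
    calc 4 * (2^((k+1)*(n-k)+2) * (Nb * 2^k)) = 2^((k+1)*(n-k)+2) * 2^k * (4 * Nb) := by ring
      _ > 2^((k+1)*(n-k)+2) * 2^k * 2^(k*k) := by
          apply Nat.mul_lt_mul_of_le_of_lt (le_refl _) hNb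
          positivity
      _ = 2^(((k+1)*(n-k)+2) + (k*k + k)) := by rw [← pow_add, ← pow_add]; ring_nf
      _ = 2^(n*k+n+2) := by rw [hexp]
      _ = 4 * 2^(n*k+n) := by rw [pow_add]; ring
  have hle : 4 * (2^((k+1)*(n-k)+2) * (Nb * 2^k)) ≤ 4 * 2^(n*k+n) :=
    Nat.mul_le_mul_left _ (le_trans (le_trans hM hlow) hScard)
  omega


lemma exists_flat {n k : ℕ} (hkn : k ≤ n) : ∃ A : Set (Fin n → ZMod 2), IsFlat A k := by
  let c : Fin k → (Fin n → ZMod 2) :=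
    fun i => (Pi.basisFun (ZMod 2) (Fin n)) (Fin.castLE hkn i)
  have hc : LinearIndependent (ZMod 2) c :=
    (Pi.basisFun (ZMod 2) (Fin n)).linearIndependent.comp _ (Fin.castLE_injective hkn)
  refine ⟨(fun w => 0 + w) '' ((Submodule.span (ZMod 2) (Set.range c) : Submodule (ZMod 2) _) : Set _),
    Submodule.span (ZMod 2) (Set.range c), 0, ?_, rfl⟩
  rw [finrank_span_eq_card hc]
  simp

lemma degLE_top {n k : ℕ} {f : BF n} {A : Set (Fin n → ZMod 2)} (hA : IsFlat A k) :
    DegLE f A k := by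
  intro B hB hsub
  have := flat_dim_le hA hB hsub
  omega

lemma lt_degOn {n k d : ℕ} {f : BF n} {A : Set (Fin n → ZMod 2)} (hA : IsFlat A k)
    (hnot : ¬ DegLE f A d) (hdk : d < k) : d < degOn f A := by
  have hne : {e | DegLE f A e}.Nonempty := ⟨k, degLE_top hA⟩
  have hmem : DegLE f A (degOn f A) := Nat.sInf_mem hne
  by_contra hc
  push_neg at hc
  exact hnot (degle_mono hmem hc)

/-- If `n > k > d ≥ 0` and `(k+1)(n-k) + 2 ≤ ∑_{i=0}^{k-d-1} C(k,i)`, then some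
Boolean function on `𝔽₂ⁿ` has degree `> d` on every `k`-dimensional flat,
i.e. `g(n,k) > d`. -/
theorem stmt11 {n k d : ℕ} (hdk : d < k) (hkn : k < n)
    (h : (k + 1) * (n - k) + 2 ≤ ∑ i ∈ Finset.range (k - d), Nat.choose k i) :
    (∃ f : BF n, ∀ A : Set (Fin n → ZMod 2), IsFlat A k → d < degOn f A) ∧
    d < gdeg n k := by
  classical
  have hk1 : 1 ≤ k := by omega
  have hkn' : k ≤ n := by omega
  set S' := ∑ i ∈ Finset.range (k - d), Nat.choose k i with hS'
  set Flats := (Finset.univ : Finset (Set (Fin n → ZMod 2))).filter (fun A => IsFlat A k)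
    with hFl
  set Bad := (Finset.univ : Finset (BF n)).filter
    (fun f => ∃ A, IsFlat A k ∧ DegLE f A d) with hBad
  have hsub : Bad ⊆ Flats.biUnion (fun A => Finset.univ.filter (fun f : BF n => DegLE f A d)) := by
    intro f hf
    rw [hBad, Finset.mem_filter] at hf
    obtain ⟨_, A, hA, hD⟩ := hf
    rw [Finset.mem_biUnion]
    exact ⟨A, by rw [hFl, Finset.mem_filter]; exact ⟨Finset.mem_univ _, hA⟩,
      by rw [Finset.mem_filter]; exact ⟨Finset.mem_univ _, hD⟩⟩
  have hBadcard : Bad.card ≤ ∑ A ∈ Flats, (Finset.univ.filter (fun f : BF n => DegLE f A d)).card :=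
    le_trans (Finset.card_le_card hsub) (Finset.card_biUnion_le)
  have hperf : ∀ A ∈ Flats, (Finset.univ.filter (fun f : BF n => DegLE f A d)).card * 2 ^ S'
      ≤ 2 ^ (2 ^ n) := by
    intro A hA
    rw [hFl, Finset.mem_filter] at hA
    exact perflat_count hdk hkn' hA.2
  have hkey : Bad.card * 2 ^ S' < 2 ^ (2 ^ n) * 2 ^ S' := by
    have h1 : Bad.card * 2 ^ S' ≤ ∑ A ∈ Flats,
        (Finset.univ.filter (fun f : BF n => DegLE f A d)).card * 2 ^ S' := by
      rw [← Finset.sum_mul]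
      exact Nat.mul_le_mul_right _ hBadcard
    have h2 : ∑ A ∈ Flats, (Finset.univ.filter (fun f : BF n => DegLE f A d)).card * 2 ^ S'
        ≤ Flats.card * 2 ^ (2 ^ n) := by
      calc _ ≤ ∑ _A ∈ Flats, 2 ^ (2 ^ n) := Finset.sum_le_sum hperf
        _ = Flats.card * 2 ^ (2 ^ n) := by rw [Finset.sum_const, smul_eq_mul]
    have h3 : Flats.card < 2 ^ ((k+1)*(n-k)+2) := flats_card hk1 hkn'
    have h4 : (2:ℕ) ^ ((k+1)*(n-k)+2) ≤ 2 ^ S' := Nat.pow_le_pow_right (by norm_num) h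
    have h5 : Flats.card * 2 ^ (2 ^ n) ≤ (2 ^ S' - 1) * 2 ^ (2 ^ n) := by
      apply Nat.mul_le_mul_right
      omega
    have h6 : (2 ^ S' - 1) * 2 ^ (2 ^ n) < 2 ^ (2 ^ n) * 2 ^ S' := by
      have hp : 0 < (2:ℕ) ^ S' := by positivity
      have hq : 0 < (2:ℕ) ^ (2 ^ n) := by positivity
      calc (2 ^ S' - 1) * 2 ^ (2 ^ n) < 2 ^ S' * 2 ^ (2 ^ n) := by
            apply Nat.mul_lt_mul_of_lt_of_le _ (le_refl _) hq
            omega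
        _ = 2 ^ (2 ^ n) * 2 ^ S' := by ring
    omega
  have hlt : Bad.card < 2 ^ (2 ^ n) := by
    have hp : 0 < (2:ℕ) ^ S' := by positivity
    exact Nat.lt_of_mul_lt_mul_right hkey
  have hcardBF : (Finset.univ : Finset (BF n)).card = 2 ^ (2 ^ n) := by
    rw [Finset.card_univ, Fintype.card_fun, Fintype.card_fun]
    simp [ZMod.card]
  have hne : Bad ≠ Finset.univ := by
    intro hEq
    rw [hEq, hcardBF] at hlt
    exact lt_irrefl _ hlt
  obtain ⟨f, _, hf⟩ := Finset.exists_of_ssubset (ssubset_of_subset_of_ne (Finset.subset_univ _) hne)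
  have hgood : ∀ A : Set (Fin n → ZMod 2), IsFlat A k → ¬ DegLE f A d := by
    intro A hA hD
    exact hf (by rw [hBad, Finset.mem_filter]; exact ⟨Finset.mem_univ _, A, hA, hD⟩)
  have hpart1 : ∀ A : Set (Fin n → ZMod 2), IsFlat A k → d < degOn f A :=
    fun A hA => lt_degOn hA (hgood A hA) hdk
  refine ⟨⟨f, hpart1⟩, ?_⟩
  obtain ⟨A₀, hA₀⟩ := exists_flat hkn'
  have halpha : d < alphaDeg f k := by
    have hne2 : {m | ∃ A, IsFlat A k ∧ degOn f A = m}.Nonempty := ⟨degOn f A₀, A₀, hA₀, rfl⟩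
    obtain ⟨A, hA, hEq⟩ := Nat.sInf_mem hne2
    rw [alphaDeg, ← hEq]
    exact hpart1 A hA
  have hbdd : BddAbove {m | ∃ f' : BF n, alphaDeg f' k = m} := by
    refine ⟨k, ?_⟩
    rintro m ⟨f', rfl⟩
    have hub : degOn f' A₀ ≤ k := Nat.sInf_le (degLE_top hA₀)
    calc alphaDeg f' k ≤ degOn f' A₀ := Nat.sInf_le ⟨A₀, hA₀, rfl⟩
      _ ≤ k := hub
  calc d < alphaDeg f k := halpha
    _ ≤ gdeg n k := le_csSup hbdd ⟨f, rfl⟩
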